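/- arXiv:2305.17757 — 2 statements merged into one kernel-verified Lean document; each statement's English description precedes it below -/
import Mathlib

section
/- For every k ≥ 2, the price of anarchy of any diversity-seeking jump game with n strategic agents of k asymmetric types (each type nonempty) and no stubborn agents is at most n/(k−1): every pure Nash equilibrium has social welfare at least k−1. -/
open Finset

variable {V τ : Type}

open Classical in
noncomputable def occNbrs [Fintype V] (G : SimpleGraph V) (C : V → Option τ) (v : V) :
    Finset V :=
  Finset.univ.filter (fun u => G.Adj v u ∧ (C u).isSome)

open Classical in
noncomputable def diffNbrs [Fintype V] (G : SimpleGraph V) (C : V → Option τ) (v : V)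
    (t : τ) : Finset V :=
  Finset.univ.filter (fun u => G.Adj v u ∧ ∃ s, C u = some s ∧ s ≠ t)

/-- Utility of the agent at node `v`: fraction of occupied neighbors of different type. -/
noncomputable def util [Fintype V] (G : SimpleGraph V) (C : V → Option τ) (v : V) : ℚ :=
  match C v with
  | none => 0
  | some t =>
      if (occNbrs G C v).card = 0 then 0
      else ((diffNbrs G C v t).card : ℚ) / ((occNbrs G C v).card : ℚ)

/-- The assignment after the agent at `u` jumps to node `w`. -/
def move [DecidableEq V] (C : V → Option τ) (u w : V) : V → Option τ :=
  fun x => if x = w then C u else if x = u then none else C x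

/-- An improving move: the agent at `u` jumps to the empty node `w`, strictly increasing
its utility. -/
def Improves [Fintype V] [DecidableEq V] (G : SimpleGraph V) (C : V → Option τ)
    (u w : V) : Prop :=
  (C u).isSome ∧ C w = none ∧ util G C u < util G (move C u w) w

/-- Pure Nash equilibrium: no agent can strictly improve by jumping to an empty node. -/
def IsEquil [Fintype V] [DecidableEq V] (G : SimpleGraph V) (C : V → Option τ) : Prop :=
  ∀ u w : V, (C u).isSome → C w = none → util G (move C u w) w ≤ util G C u

/-- Social welfare: sum of agents' utilities. -/
noncomputable def SW [Fintype V] (G : SimpleGraph V) (C : V → Option τ) : ℚ :=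
  ∑ v, util G C v

open Classical in
noncomputable def pw (C : V → Option τ) (m : ℚ) (u v : V) : ℚ :=
  if (C u).isNone ∨ (C v).isNone then m
  else if C u = C v then 1 else 0

open Classical in
/-- The potential function: sum over edges, weight 1 for same-type endpoints,
`m` if an endpoint is unoccupied, 0 for different-type endpoints. -/
noncomputable def potential [Fintype V] (G : SimpleGraph V) (C : V → Option τ)
    (m : ℚ) : ℚ :=
  (∑ p : V × V, if G.Adj p.1 p.2 then pw C m p.1 p.2 else 0) / 2

open Classical in
noncomputable def countType [Fintype V] (C : V → Option τ) (t : τ) : ℕ :=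
  (Finset.univ.filter (fun v => C v = some t)).card

open Classical in
noncomputable def emptyCount [Fintype V] (C : V → Option τ) : ℕ :=
  (Finset.univ.filter (fun v => C v = none)).card


lemma cross_walk' [Fintype V] (G : SimpleGraph V) (C : V → Option τ) :
    ∀ {a b : V}, G.Walk a b → (C a).isSome → C b = none →
    ∃ x y, G.Adj y x ∧ (C y).isSome ∧ C x = none := by
  intro a b p
  induction p with
  | nil => intro h1 h2; simp [h2] at h1
  | @cons a c b hac p ih =>
    intro h1 h2
    by_cases hc : (C c).isSome
    · exact ih hc h2
    · refine ⟨c, a, hac, h1, ?_⟩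
      cases hcv : C c <;> simp_all

lemma util_nonneg' [Fintype V] (G : SimpleGraph V) (C : V → Option τ) (v : V) :
    0 ≤ util G C v := by
  unfold util
  cases C v with
  | none => simp
  | some t =>
    dsimp only
    split
    · exact le_refl 0
    · positivity

/-- With k ≥ 2 asymmetric (nonempty) types, every pure Nash equilibrium has
social welfare at least k − 1; since the optimum is at most n, the price of anarchy is
at most n/(k−1). -/
theorem stmt5 {V τ : Type} [Fintype V] [DecidableEq V] [Fintype τ]
    (G : SimpleGraph V) (hconn : G.Connected)
    (hk : 2 ≤ Fintype.card τ)
    (C : V → Option τ)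
    (htypes : ∀ t : τ, ∃ v, C v = some t)
    (hempty : ∃ v, C v = none)
    (heq : IsEquil G C) :
    (Fintype.card τ : ℚ) - 1 ≤ SW G C := by
  classical
  have hτ : Nonempty τ := Fintype.card_pos_iff.mp (by omega)
  obtain ⟨t0⟩ := hτ
  haveI : Inhabited τ := ⟨t0⟩
  obtain ⟨b, hb⟩ := hempty
  obtain ⟨a, ha⟩ := htypes t0
  have ha' : (C a).isSome := by simp [ha]
  obtain ⟨w, v, hadj, hv, hw⟩ :=
    cross_walk' G C ((hconn.preconnected a b).some) ha' hb
  set occ : Finset V := occNbrs G C w with hocc_def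
  have hvocc : v ∈ occ := by
    simp [hocc_def, occNbrs, hadj.symm, hv]
  have hopos : 0 < occ.card := Finset.card_pos.mpr ⟨v, hvocc⟩
  have hoQ : (0:ℚ) < (occ.card : ℚ) := by exact_mod_cast hopos
  have hut : ∀ t : τ, C (htypes t).choose = some t := fun t => (htypes t).choose_spec
  set ut : τ → V := fun t => (htypes t).choose with hut_def
  have hdiff_eq : ∀ t : τ, diffNbrs G C w t = occ.filter (fun x => ¬ C x = some t) := by
    intro t
    ext x
    simp only [diffNbrs, hocc_def, occNbrs, Finset.mem_filter, Finset.mem_univ, true_and]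
    constructor
    · rintro ⟨hadj', s, hs, hst⟩
      exact ⟨⟨hadj', by simp [hs]⟩, by simp [hs, hst]⟩
    · rintro ⟨⟨hadj', hs⟩, hne⟩
      obtain ⟨s, hsx⟩ := Option.isSome_iff_exists.mp hs
      exact ⟨hadj', s, hsx, fun h => hne (h ▸ hsx)⟩
  have key : ∀ t : τ, ((diffNbrs G C w t).card : ℚ) / (occ.card : ℚ) ≤ util G C (ut t) := by
    intro t
    have hu : C (ut t) = some t := hut t
    have husome : (C (ut t)).isSome := by simp [hu]
    have hle := heq (ut t) w husome hw
    refine le_trans ?_ hle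
    set u := ut t with hu_def
    have hmw : move C u w w = some t := by simp [move, hu]
    have hocc' : occNbrs G (move C u w) w = occ.erase u := by
      ext x
      simp only [occNbrs, hocc_def, Finset.mem_filter, Finset.mem_erase, Finset.mem_univ,
        true_and]
      simp only [move]
      constructor
      · rintro ⟨hadj', hs⟩
        have hxw : x ≠ w := hadj'.ne'
        rw [if_neg hxw] at hs
        by_cases hxu : x = u
        · rw [if_pos hxu] at hs; simp at hs
        · rw [if_neg hxu] at hs; exact ⟨hxu, hadj', hs⟩
      · rintro ⟨hxu, hadj', hs⟩
        have hxw : x ≠ w := hadj'.ne'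
        refine ⟨hadj', ?_⟩
        rw [if_neg hxw, if_neg hxu]; exact hs
    have hdiff' : diffNbrs G (move C u w) w t = diffNbrs G C w t := by
      ext x
      simp only [diffNbrs, Finset.mem_filter, Finset.mem_univ, true_and]
      simp only [move]
      constructor
      · rintro ⟨hadj', s, hs, hst⟩
        have hxw : x ≠ w := hadj'.ne'
        rw [if_neg hxw] at hs
        by_cases hxu : x = u
        · rw [if_pos hxu] at hs; simp at hs
        · rw [if_neg hxu] at hs; exact ⟨hadj', s, hs, hst⟩
      · rintro ⟨hadj', s, hs, hst⟩
        have hxw : x ≠ w := hadj'.ne'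
        have hxu : x ≠ u := by
          intro h
          rw [h, hu] at hs
          exact hst (Option.some.inj hs).symm
        exact ⟨hadj', s, by rw [if_neg hxw, if_neg hxu]; exact hs, hst⟩
    have hutil0 : util G (move C u w) w =
        if (occNbrs G (move C u w) w).card = 0 then 0
        else ((diffNbrs G (move C u w) w t).card : ℚ) / ((occNbrs G (move C u w) w).card : ℚ) := by
      unfold util
      rw [hmw]
    rw [hutil0, hocc', hdiff']
    by_cases h0 : (occ.erase u).card = 0
    · rw [if_pos h0]
      have hsub : occ ⊆ {u} := by
        intro x hx
        by_contra hxu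
        have hxm : x ∈ occ.erase u := Finset.mem_erase.mpr ⟨by simpa using hxu, hx⟩
        simp [Finset.card_eq_zero.mp h0] at hxm
      have hdz : diffNbrs G C w t = ∅ := by
        rw [hdiff_eq t]
        refine Finset.eq_empty_of_forall_notMem ?_
        intro x hx
        obtain ⟨hxo, hxne⟩ := Finset.mem_filter.mp hx
        have hxu : x = u := by simpa using hsub hxo
        exact hxne (hxu ▸ hu)
      simp [hdz]
    · rw [if_neg h0]
      have h1 : ((occ.erase u).card : ℚ) ≤ (occ.card : ℚ) := by
        exact_mod_cast Finset.card_erase_le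
      have h2 : (0:ℚ) < ((occ.erase u).card : ℚ) := by
        exact_mod_cast Nat.pos_of_ne_zero h0
      exact div_le_div_of_nonneg_left (by positivity) h2 h1
  -- counting: the fibers of occ over types
  have hfib : occ.card = ∑ t : τ, (occ.filter (fun x => C x = some t)).card := by
    have h := Finset.card_eq_sum_card_fiberwise
      (f := fun x => (C x).iget) (s := occ) (t := Finset.univ)
      (fun x _ => Finset.mem_univ _)
    rw [h]
    refine Finset.sum_congr rfl (fun t _ => ?_)
    congr 1
    refine Finset.filter_congr (fun x hx => ?_)
    have hxs : (C x).isSome := by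
      simp only [hocc_def, occNbrs, Finset.mem_filter] at hx
      exact hx.2.2
    obtain ⟨s, hsx⟩ := Option.isSome_iff_exists.mp hxs
    simp [hsx]
  have hsplit : ∀ t : τ, (occ.filter (fun x => C x = some t)).card
      + (diffNbrs G C w t).card = occ.card := by
    intro t
    rw [hdiff_eq t]
    exact Finset.card_filter_add_card_filter_not _
  have hsumd : occ.card + ∑ t : τ, (diffNbrs G C w t).card
      = Fintype.card τ * occ.card := by
    have h3 : ∑ t : τ, ((occ.filter (fun x => C x = some t)).card
        + (diffNbrs G C w t).card) = Fintype.card τ * occ.card := by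
      rw [Finset.sum_congr rfl (fun t _ => hsplit t)]
      simp [Finset.sum_const, Finset.card_univ]
    rw [Finset.sum_add_distrib] at h3
    rw [← hfib] at h3
    exact h3
  have hsumdQ : ∑ t : τ, ((diffNbrs G C w t).card : ℚ)
      = ((Fintype.card τ : ℚ) - 1) * (occ.card : ℚ) := by
    have := hsumd
    have hcast : (occ.card : ℚ) + ∑ t : τ, ((diffNbrs G C w t).card : ℚ)
        = (Fintype.card τ : ℚ) * (occ.card : ℚ) := by
      exact_mod_cast this
    linarith
  have hchain : (Fintype.card τ : ℚ) - 1 ≤ ∑ t : τ, util G C (ut t) := by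
    calc (Fintype.card τ : ℚ) - 1
        = ∑ t : τ, ((diffNbrs G C w t).card : ℚ) / (occ.card : ℚ) := by
          rw [← Finset.sum_div, hsumdQ]
          field_simp
      _ ≤ ∑ t : τ, util G C (ut t) := Finset.sum_le_sum (fun t _ => key t)
  refine le_trans hchain ?_
  have hinj : ∀ x ∈ (Finset.univ : Finset τ), ∀ y ∈ (Finset.univ : Finset τ),
      ut x = ut y → x = y := by
    intro x _ y _ hxy
    have h1 : C (ut x) = some x := hut x
    have h2 : C (ut y) = some y := hut y
    rw [hxy, h2] at h1
    exact (Option.some.inj h1).symm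
  have himg : ∑ x ∈ Finset.image ut Finset.univ, util G C x = ∑ t : τ, util G C (ut t) :=
    Finset.sum_image hinj
  rw [← himg, SW]
  exact Finset.sum_le_sum_of_subset_of_nonneg (Finset.subset_univ _)
    (fun i _ _ => util_nonneg' G C i)
end

section
/- On a spider graph, any improving move of an agent that involves neither the center node as source nor as target strictly decreases the potential Φ by at least m, where Φ uses edge weights 1 (same-type endpoints), m ∈ (0, 1/2) (one endpoint empty), and 0 (different-type endpoints). -/
open Finset

variable {V τ : Type}

open Classical in

lemma arith16 (m : ℚ) (hm0 : 0 < m) (hm1 : m < 1/2) (k k' a a' d d' : ℕ)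
    (hk : k ≤ 2) (hk' : k' ≤ 2) (ha : a + d = k) (ha' : a' + d' = k')
    (hstruct : k = 0 → k' ≤ 1)
    (himp : (if k = 0 then (0:ℚ) else (d:ℚ)/k) < (if k' = 0 then 0 else (d':ℚ)/k')) :
    (m*k - a + a' - m*k' : ℚ) ≤ -m := by
  have hA : a ≤ 2 := by omega
  have hA' : a' ≤ 2 := by omega
  have hD : d ≤ 2 := by omega
  have hD' : d' ≤ 2 := by omega
  interval_cases k <;> interval_cases k' <;> (try omega) <;>
  interval_cases a <;> interval_cases a' <;> (try omega) <;>
  interval_cases d <;> interval_cases d' <;> (try omega) <;>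
    norm_num at himp <;> (try norm_num) <;> linarith

lemma sum_split {V : Type} [Fintype V] [DecidableEq V] (u w : V) (huw : u ≠ w)
    (f : V → V → ℚ)
    (hsym : ∀ x y, f x y = f y x)
    (h0 : ∀ x y, x ≠ u → x ≠ w → y ≠ u → y ≠ w → f x y = 0)
    (huw0 : f u w = 0) (huu : f u u = 0) (hww : f w w = 0) :
    ∑ x, ∑ y, f x y = 2 * ((∑ y, f u y) + (∑ y, f w y)) := by
  have hsub : ({u, w} : Finset V) ⊆ univ := subset_univ _
  have hsplit : ∀ (g : V → ℚ),
      ∑ y, g y = (∑ y ∈ univ \ {u, w}, g y) + (g u + g w) := by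
    intro g
    rw [← Finset.sum_sdiff hsub, Finset.sum_pair huw]
  have hin : ∀ x, ∑ y, f x y = (∑ y ∈ univ \ {u, w}, f x y) + (f x u + f x w) := by
    intro x
    rw [hsplit (fun y => f x y)]
  calc ∑ x, ∑ y, f x y
      = ∑ x, ((∑ y ∈ univ \ {u, w}, f x y) + (f x u + f x w)) := by
        exact Finset.sum_congr rfl fun x _ => hin x
    _ = (∑ x, ∑ y ∈ univ \ {u, w}, f x y) + ((∑ x, f x u) + (∑ x, f x w)) := by
        rw [Finset.sum_add_distrib, Finset.sum_add_distrib]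
    _ = (∑ y ∈ univ \ {u, w}, ∑ x, f x y) + ((∑ x, f x u) + (∑ x, f x w)) := by
        rw [Finset.sum_comm]
    _ = (∑ y ∈ univ \ {u, w}, (f u y + f w y)) + ((∑ y, f u y) + (∑ y, f w y)) := by
        congr 1
        · apply Finset.sum_congr rfl
          intro y hy
          simp only [mem_sdiff, mem_insert, mem_singleton] at hy
          push_neg at hy
          rw [hsplit (fun x => f x y), Finset.sum_eq_zero, zero_add]
          intro x hx
          simp only [mem_sdiff, mem_insert, mem_singleton] at hx
          push_neg at hx
          exact h0 x y hx.2.1 hx.2.2 hy.2.1 hy.2.2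
        · congr 1 <;> exact Finset.sum_congr rfl fun x _ => hsym x _
    _ = 2 * ((∑ y, f u y) + (∑ y, f w y)) := by
        rw [Finset.sum_sdiff_eq_sub hsub, Finset.sum_pair huw,
          Finset.sum_add_distrib, huu, hww, huw0, hsym w u, huw0]
        ring

open Classical in
lemma util_some {V τ : Type} [Fintype V] (G : SimpleGraph V) (C : V → Option τ)
    (v : V) (t : τ) (h : C v = some t) :
    util G C v = if (occNbrs G C v).card = 0 then 0
      else ((diffNbrs G C v t).card : ℚ) / ((occNbrs G C v).card : ℚ) := by
  unfold util
  rw [h]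

open Classical in
/-- On a spider graph (a tree with a unique node `c` of degree ≥ 3) with a
single empty node, any improving move involving neither the center as source nor target
decreases the potential (with weights 1/m/0, m ∈ (0,1/2)) by at least `m`. -/
theorem stmt16 {V τ : Type} [Fintype V] [DecidableEq V]
    (G : SimpleGraph V) (hconn : G.Connected) (hac : G.IsAcyclic)
    (c : V) (hc : 3 ≤ G.degree c) (hother : ∀ v, v ≠ c → G.degree v ≤ 2)
    (m : ℚ) (hm0 : 0 < m) (hm1 : m < 1 / 2)
    (C : V → Option τ) (hone : emptyCount C = 1)
    (u w : V) (hu : u ≠ c) (hw : w ≠ c) (h : Improves G C u w) :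
    potential G (move C u w) m ≤ potential G C m - m := by
  classical
  obtain ⟨husome, hCw, himp⟩ := h
  obtain ⟨t, hCu⟩ := Option.isSome_iff_exists.mp husome
  set C' := move C u w with hC'def
  have huw : u ≠ w := by rintro rfl; rw [hCw] at hCu; exact absurd hCu (by simp)
  have huniq : ∀ y, C y = none → y = w := by
    intro y hy
    have hw1 : w ∈ Finset.univ.filter (fun v => C v = none) := by simp [hCw]
    have hy1 : y ∈ Finset.univ.filter (fun v => C v = none) := by simp [hy]
    obtain ⟨x, hx⟩ := Finset.card_eq_one.mp hone
    rw [hx] at hw1 hy1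
    simp only [Finset.mem_singleton] at hw1 hy1
    rw [hy1, hw1]
  have hoccC : ∀ y, (C y).isSome ↔ y ≠ w := by
    intro y
    constructor
    · rintro hy rfl; rw [hCw] at hy; exact (Bool.noConfusion hy)
    · intro hy
      cases hC : C y with
      | none => exact absurd (huniq y hC) hy
      | some s => rfl
  have hC'w : C' w = some t := by simp [hC'def, move, hCu]
  have hC'u : C' u = none := by simp [hC'def, move, huw]
  have hC'x : ∀ x, x ≠ u → x ≠ w → C' x = C x := by
    intro x h1 h2; simp [hC'def, move, h1, h2]
  have hoccC' : ∀ y, (C' y).isSome ↔ y ≠ u := by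
    intro y
    constructor
    · rintro hy rfl; rw [hC'u] at hy; exact (Bool.noConfusion hy)
    · intro hy
      by_cases h2 : y = w
      · subst h2; rw [hC'w]; rfl
      · rw [hC'x y hy h2]; exact (hoccC y).mpr h2
  set k := ((G.neighborFinset u).erase w).card with hk_def
  set k' := ((G.neighborFinset w).erase u).card with hk'_def
  set a := (((G.neighborFinset u).erase w).filter (fun y => C y = some t)).card with ha_def
  set d := (((G.neighborFinset u).erase w).filter (fun y => ¬ C y = some t)).card with hd_def
  set a' := (((G.neighborFinset w).erase u).filter (fun y => C' y = some t)).card with ha'_def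
  set d' := (((G.neighborFinset w).erase u).filter (fun y => ¬ C' y = some t)).card with hd'_def
  have had : a + d = k := Finset.card_filter_add_card_filter_not _
  have had' : a' + d' = k' := Finset.card_filter_add_card_filter_not _
  have hoccU : occNbrs G C u = (G.neighborFinset u).erase w := by
    ext y
    simp only [occNbrs, Finset.mem_filter, Finset.mem_univ, true_and,
      Finset.mem_erase, SimpleGraph.mem_neighborFinset, hoccC y]
    tauto
  have hdiffU : diffNbrs G C u t
      = ((G.neighborFinset u).erase w).filter (fun y => ¬ C y = some t) := by
    ext y
    simp only [diffNbrs, Finset.mem_filter, Finset.mem_univ, true_and,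
      Finset.mem_erase, SimpleGraph.mem_neighborFinset]
    constructor
    · rintro ⟨hadj, s, hs, hst⟩
      refine ⟨⟨?_, hadj⟩, ?_⟩
      · rintro rfl; rw [hCw] at hs; exact absurd hs (by simp)
      · rw [hs]; simp [hst]
    · rintro ⟨⟨hyw, hadj⟩, hne⟩
      obtain ⟨s, hs⟩ := Option.isSome_iff_exists.mp ((hoccC y).mpr hyw)
      exact ⟨hadj, s, hs, by rintro rfl; exact hne hs⟩
  have hoccW : occNbrs G C' w = (G.neighborFinset w).erase u := by
    ext y
    simp only [occNbrs, Finset.mem_filter, Finset.mem_univ, true_and,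
      Finset.mem_erase, SimpleGraph.mem_neighborFinset, hoccC' y]
    tauto
  have hdiffW : diffNbrs G C' w t
      = ((G.neighborFinset w).erase u).filter (fun y => ¬ C' y = some t) := by
    ext y
    simp only [diffNbrs, Finset.mem_filter, Finset.mem_univ, true_and,
      Finset.mem_erase, SimpleGraph.mem_neighborFinset]
    constructor
    · rintro ⟨hadj, s, hs, hst⟩
      refine ⟨⟨?_, hadj⟩, ?_⟩
      · rintro rfl; rw [hC'u] at hs; exact absurd hs (by simp)
      · rw [hs]; simp [hst]
    · rintro ⟨⟨hyu, hadj⟩, hne⟩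
      obtain ⟨s, hs⟩ := Option.isSome_iff_exists.mp ((hoccC' y).mpr hyu)
      exact ⟨hadj, s, hs, by rintro rfl; exact hne hs⟩
  have hutilU : util G C u = if k = 0 then 0 else (d:ℚ)/k := by
    rw [util_some G C u t hCu, hoccU, hdiffU]
  have hutilW : util G C' w = if k' = 0 then 0 else (d':ℚ)/k' := by
    rw [util_some G C' w t hC'w, hoccW, hdiffW]
  rw [hutilU, hutilW] at himp
  have hdegu : (G.neighborFinset u).card ≤ 2 := by
    rw [G.card_neighborFinset_eq_degree]; exact hother u hu
  have hdegw : (G.neighborFinset w).card ≤ 2 := by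
    rw [G.card_neighborFinset_eq_degree]; exact hother w hw
  have hk2 : k ≤ 2 := le_trans (Finset.card_erase_le) hdegu
  have hk'2 : k' ≤ 2 := le_trans (Finset.card_erase_le) hdegw
  have hstruct : k = 0 → k' ≤ 1 := by
    intro hk0
    have hnbr : (G.neighborFinset u).Nonempty := by
      obtain ⟨p⟩ := hconn.preconnected u c
      cases p with
      | nil => exact absurd rfl hu
      | cons hadj q => exact ⟨_, by rw [SimpleGraph.mem_neighborFinset]; exact hadj⟩
    obtain ⟨y, hy⟩ := hnbr
    have hyw : y = w := by
      by_contra hne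
      have hmem : y ∈ (G.neighborFinset u).erase w := Finset.mem_erase.mpr ⟨hne, hy⟩
      rw [Finset.card_eq_zero.mp hk0] at hmem
      exact absurd hmem (Finset.notMem_empty y)
    have hy' : w ∈ G.neighborFinset u := hyw ▸ hy
    have huNw : u ∈ G.neighborFinset w := by
      rw [SimpleGraph.mem_neighborFinset]
      exact ((SimpleGraph.mem_neighborFinset _ _ _).mp hy').symm
    rw [hk'_def, Finset.card_erase_of_mem huNw]
    omega
  set f : V → V → ℚ := fun x y =>
    if G.Adj x y then pw C' m x y - pw C m x y else 0 with hf_def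
  have hpwm : ∀ (D : V → Option τ) x y, (D x).isNone ∨ (D y).isNone →
      pw D m x y = m := by
    intro D x y hxy
    unfold pw
    rw [if_pos hxy]
  have hpw_symm : ∀ (D : V → Option τ) x y, pw D m x y = pw D m y x := by
    intro D x y
    unfold pw
    by_cases h1 : (D x).isNone <;> by_cases h2 : (D y).isNone <;>
      simp [h1, h2, eq_comm]
  have hf_symm : ∀ x y, f x y = f y x := by
    intro x y
    simp only [hf_def, G.adj_comm x y, hpw_symm C' x y, hpw_symm C x y]
  have hf0 : ∀ x y, x ≠ u → x ≠ w → y ≠ u → y ≠ w → f x y = 0 := by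
    intro x y hxu hxw hyu hyw
    simp only [hf_def]
    rw [show pw C' m x y = pw C m x y by
      unfold pw; rw [hC'x x hxu hxw, hC'x y hyu hyw]]
    simp
  have hfuw : f u w = 0 := by
    simp only [hf_def]
    rw [hpwm C' u w (Or.inl (by rw [hC'u]; rfl)),
      hpwm C u w (Or.inr (by rw [hCw]; rfl))]
    simp
  have hfuu : f u u = 0 := by simp [hf_def]
  have hfww : f w w = 0 := by simp [hf_def]
  have hdiff : potential G C' m - potential G C m = (∑ x, ∑ y, f x y) / 2 := by
    unfold potential
    rw [div_sub_div_same, ← Finset.sum_sub_distrib]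
    congr 1
    calc (∑ p : V × V, ((if G.Adj p.1 p.2 then pw C' m p.1 p.2 else 0)
          - (if G.Adj p.1 p.2 then pw C m p.1 p.2 else 0)))
        = ∑ p : V × V, f p.1 p.2 := by
          apply Finset.sum_congr rfl; intro p _
          simp only [hf_def]
          split <;> simp
      _ = ∑ x, ∑ y, f x y := Fintype.sum_prod_type (f := fun p : V × V => f p.1 p.2)
  have hrow : ∀ (x z : V) (g : V → ℚ), (∀ y ∈ (G.neighborFinset x).erase z,
        pw C' m x y - pw C m x y = g y) →
      (pw C' m x z - pw C m x z = 0) →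
      ∑ y, f x y = ∑ y ∈ (G.neighborFinset x).erase z, g y := by
    intro x z g hg hz
    have h1 : ∑ y, f x y = ∑ y ∈ Finset.univ.filter (fun y => G.Adj x y),
        (pw C' m x y - pw C m x y) := by
      rw [Finset.sum_filter]
    have h2 : Finset.univ.filter (fun y => G.Adj x y) = G.neighborFinset x := by
      ext y; simp
    rw [h1, h2]
    by_cases hmem : z ∈ G.neighborFinset x
    · rw [← Finset.add_sum_erase _ _ hmem, hz, zero_add]
      exact Finset.sum_congr rfl hg
    · rw [Finset.erase_eq_of_notMem hmem]
      exact Finset.sum_congr rfl fun y hy =>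
        hg y (Finset.mem_erase.mpr ⟨by rintro rfl; exact hmem hy, hy⟩)
  have hrowU : ∑ y, f u y = m * k - a := by
    rw [hrow u w (fun y => m - if C y = some t then 1 else 0) ?_ ?_]
    · rw [Finset.sum_sub_distrib, Finset.sum_const, Finset.sum_boole]
      simp only [nsmul_eq_mul, ← hk_def, ← ha_def]
      ring_nf
    · intro y hy
      obtain ⟨hyw, hyN⟩ := Finset.mem_erase.mp hy
      rw [hpwm C' u y (Or.inl (by rw [hC'u]; rfl))]
      have hp : pw C m u y = if C y = some t then 1 else 0 := by
        unfold pw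
        rw [hCu]
        obtain ⟨s, hs⟩ := Option.isSome_iff_exists.mp ((hoccC y).mpr hyw)
        rw [hs]
        simp [eq_comm]
      rw [hp]
    · rw [hpwm C' u w (Or.inl (by rw [hC'u]; rfl)),
        hpwm C u w (Or.inr (by rw [hCw]; rfl))]
      simp
  have hrowW : ∑ y, f w y = a' - m * k' := by
    rw [hrow w u (fun y => (if C' y = some t then 1 else 0) - m) ?_ ?_]
    · rw [Finset.sum_sub_distrib, Finset.sum_const, Finset.sum_boole]
      simp only [nsmul_eq_mul, ← hk'_def, ← ha'_def]
      ring_nf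
    · intro y hy
      obtain ⟨hyu, hyN⟩ := Finset.mem_erase.mp hy
      rw [hpwm C w y (Or.inl (by rw [hCw]; rfl))]
      have hp : pw C' m w y = if C' y = some t then 1 else 0 := by
        unfold pw
        rw [hC'w]
        obtain ⟨s, hs⟩ := Option.isSome_iff_exists.mp ((hoccC' y).mpr hyu)
        rw [hs]
        simp [eq_comm]
      rw [hp]
    · rw [hpwm C' w u (Or.inr (by rw [hC'u]; rfl)),
        hpwm C w u (Or.inl (by rw [hCw]; rfl))]
      simp
  have hsum : ∑ x, ∑ y, f x y = 2 * ((m * k - a) + (a' - m * k')) := by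
    rw [sum_split u w huw f hf_symm hf0 hfuw hfuu hfww, hrowU, hrowW]
  have hfinal : potential G C' m - potential G C m = m*k - a + a' - m*k' := by
    rw [hdiff, hsum]; ring
  have harith := arith16 m hm0 hm1 k k' a a' d d' hk2 hk'2 had had' hstruct himp
  linarith
end
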